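/- Let n ≥ 1 and let λ = (λ_1 ≥ … ≥ λ_n ≥ 0) be an integer partition of length n, and let λ ⊞ 1/2 denote the half-partition (λ_1 + 1/2, …, λ_n + 1/2). Then: (i) the ratio of dimensions satisfies ∏_{1≤i≤j≤n} (λ_i+λ_j+2n+2−i−j)/(λ_i+λ_j+2n+1−i−j) ≤ 2^n; (ii) the difference of exponents satisfies (1/(2n+1))·∑_{i=1}^n ((λ_i+1/2)² + (2n+1−2i)(λ_i+1/2)) − (1/(2n+1))·∑_{i=1}^n (λ_i² + (2n+1−2i)λ_i) ≥ n/4; and consequently (iii) ∏_{1≤i≤j≤n} (λ_i+λ_j+2n+2−i−j)/(λ_i+λ_j+2n+1−i−j) · (2n+1)^{−(1/(2n+1))·∑_{i=1}^n (λ_i + 1/4 + (2n+1−2i)/2)} ≤ exp(n·(log 2 − log(2n+1)/4)) ≤ 2. -/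

import Mathlib

open Finset

lemma tele (f : ℕ → ℝ) (a b : ℕ) (hab : a ≤ b)
    (h1 : ∀ k, a ≤ k → k ≤ b → 1 ≤ f k)
    (h2 : ∀ k, a ≤ k → k + 1 ≤ b → f (k + 1) + 1 ≤ f k) :
    ∏ k ∈ Finset.Icc a b, (f k + 1) / f k ≤ (f a + 1) / f b := by
  induction b, hab using Nat.le_induction with
  | base => simp [Finset.Icc_self]
  | succ m hm ih =>
    have hA : (1:ℝ) ≤ f a := h1 a le_rfl (by omega)
    have hB : (1:ℝ) ≤ f m := h1 m hm (by omega)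
    have hC : (1:ℝ) ≤ f (m+1) := h1 (m+1) (by omega) le_rfl
    have hstep : f (m+1) + 1 ≤ f m := h2 m hm le_rfl
    have ih' : ∏ k ∈ Finset.Icc a m, (f k + 1) / f k ≤ (f a + 1) / f m :=
      ih (fun k hk hk' => h1 k hk (by omega)) (fun k hk hk' => h2 k hk (by omega))
    have hP : (0:ℝ) ≤ ∏ k ∈ Finset.Icc a m, (f k + 1) / f k := by
      apply Finset.prod_nonneg
      intro k hk
      simp only [Finset.mem_Icc] at hk
      have := h1 k hk.1 (by omega)
      positivity
    have hins : Finset.Icc a (m+1) = insert (m+1) (Finset.Icc a m) :=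
      (Finset.insert_Icc_right_eq_Icc_add_one (by omega)).symm
    rw [hins, Finset.prod_insert (by simp)]
    set P := ∏ k ∈ Finset.Icc a m, (f k + 1) / f k
    rw [div_mul_eq_mul_div, div_le_div_iff₀ (by linarith) (by linarith)]
    have h3 : (f (m+1) + 1) * P ≤ (f (m+1) + 1) * ((f a + 1) / f m) :=
      mul_le_mul_of_nonneg_left ih' (by linarith)
    have h4 : (f (m+1) + 1) * ((f a + 1) / f m) ≤ f a + 1 := by
      rw [mul_div_assoc', div_le_iff₀ (by linarith)]
      nlinarith
    nlinarith

lemma row (n : ℕ) (hn : 1 ≤ n) (lam : Fin n → ℕ) (hanti : Antitone lam) (i : Fin n) :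
    (0 ≤ ∏ j ∈ Finset.Ici i,
        (((lam i : ℝ) + (lam j : ℝ) +
            (2 * (n : ℝ) + 2 - (((i : ℕ) : ℝ) + 1) - (((j : ℕ) : ℝ) + 1))) /
          ((lam i : ℝ) + (lam j : ℝ) +
            (2 * (n : ℝ) + 1 - (((i : ℕ) : ℝ) + 1) - (((j : ℕ) : ℝ) + 1))))) ∧
    (∏ j ∈ Finset.Ici i,
        (((lam i : ℝ) + (lam j : ℝ) +
            (2 * (n : ℝ) + 2 - (((i : ℕ) : ℝ) + 1) - (((j : ℕ) : ℝ) + 1))) /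
          ((lam i : ℝ) + (lam j : ℝ) +
            (2 * (n : ℝ) + 1 - (((i : ℕ) : ℝ) + 1) - (((j : ℕ) : ℝ) + 1))))) ≤ 2 := by
  set L : ℕ → ℝ := fun k => if h : k < n then (lam ⟨k, h⟩ : ℝ) else 0 with hL
  have hLval : ∀ j : Fin n, L (j : ℕ) = (lam j : ℝ) := by
    intro j; simp [hL, j.isLt]
  have hLnonneg : ∀ k, 0 ≤ L k := by
    intro k; simp only [hL]; split <;> positivity
  have hLmono : ∀ k, k + 1 < n → L (k+1) ≤ L k := by
    intro k hk
    have h1 : k < n := by omega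
    simp only [hL, dif_pos hk, dif_pos h1]
    exact_mod_cast hanti (show (⟨k, h1⟩ : Fin n) ≤ ⟨k+1, hk⟩ from by simp [Fin.le_def])
  set f : ℕ → ℝ := fun k => L (i : ℕ) + L k + (2 * (n:ℝ) - 1 - ((i:ℕ):ℝ) - (k:ℝ)) with hf
  have hi : (i : ℕ) ≤ n - 1 := by omega
  have h1 : ∀ k, (i:ℕ) ≤ k → k ≤ n - 1 → 1 ≤ f k := by
    intro k hk hk'
    have hc : ((i:ℕ):ℝ) + (k:ℝ) + 2 ≤ 2 * n := by
      have : (i:ℕ) + k + 2 ≤ 2 * n := by omega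
      exact_mod_cast this
    have := hLnonneg (i:ℕ); have := hLnonneg k
    simp only [hf]; linarith
  have h2 : ∀ k, (i:ℕ) ≤ k → k + 1 ≤ n - 1 → f (k + 1) + 1 ≤ f k := by
    intro k hk hk'
    have hm := hLmono k (by omega)
    simp only [hf]; push_cast; linarith
  have hprod : (∏ j ∈ Finset.Ici i,
        (((lam i : ℝ) + (lam j : ℝ) +
            (2 * (n : ℝ) + 2 - (((i : ℕ) : ℝ) + 1) - (((j : ℕ) : ℝ) + 1))) /
          ((lam i : ℝ) + (lam j : ℝ) +
            (2 * (n : ℝ) + 1 - (((i : ℕ) : ℝ) + 1) - (((j : ℕ) : ℝ) + 1)))))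
      = ∏ k ∈ Finset.Icc (i : ℕ) (n - 1), (f k + 1) / f k := by
    rw [show Finset.Icc (i:ℕ) (n-1) = Finset.Ico (i:ℕ) n by ext x; simp only [Finset.mem_Icc, Finset.mem_Ico]; omega,
      ← Fin.map_valEmbedding_Ici, Finset.prod_map]
    apply Finset.prod_congr rfl
    intro j _
    simp only [Fin.valEmbedding_apply, hf, hLval]
    ring_nf
  constructor
  · rw [hprod]
    apply Finset.prod_nonneg
    intro k hk
    simp only [Finset.mem_Icc] at hk
    have := h1 k hk.1 hk.2
    positivity
  · rw [hprod]
    have htel := tele f (i:ℕ) (n-1) hi h1 h2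
    have hfi : f (i:ℕ) = 2 * (lam i : ℝ) + 2 * n - 1 - 2 * ((i:ℕ):ℝ) := by
      simp only [hf, hLval]; ring
    have hfn : f (n-1) = (lam i : ℝ) + L (n-1) + ((n:ℝ) - ((i:ℕ):ℝ)) := by
      simp only [hf, hLval]
      have : ((n - 1 : ℕ) : ℝ) = (n:ℝ) - 1 := by
        rw [Nat.cast_sub hn]; norm_num
      rw [this]; ring
    have hfnpos : (1:ℝ) ≤ f (n-1) := h1 (n-1) hi le_rfl
    have hbound : (f (i:ℕ) + 1) / f (n-1) ≤ 2 := by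
      rw [div_le_iff₀ (by linarith)]
      have := hLnonneg (n-1)
      have hc : ((i:ℕ):ℝ) ≤ (n:ℝ) - 1 := by
        have : ((i:ℕ):ℝ) + 1 ≤ (n:ℝ) := by exact_mod_cast i.isLt
        linarith
      rw [hfi, hfn]; nlinarith
    linarith

lemma nat_pow_ineq (n : ℕ) (hn : 1 ≤ n) : 16 ^ (n - 1) ≤ (2 * n + 1) ^ n := by
  rcases le_or_gt n 7 with h | h
  · interval_cases n <;> norm_num
  · calc 16 ^ (n-1) ≤ (2*n+1) ^ (n-1) := Nat.pow_le_pow_left (by omega) _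
      _ ≤ (2*n+1) ^ n := Nat.pow_le_pow_right (by omega) (by omega)

lemma keysum (n : ℕ) (hn : 1 ≤ n) (lam : Fin n → ℕ) :
    ((n:ℝ)/4) * (2*(n:ℝ)+1) ≤
      ∑ i : Fin n, ((lam i : ℝ) + 1/4 + (2*(n:ℝ)+1 - 2*(((i:ℕ):ℝ)+1))/2) := by
  have hgauss : (∑ i ∈ Finset.range n, (i:ℝ)) * 2 = (n:ℝ) * ((n:ℝ)-1) := by
    have h := Finset.sum_range_id_mul_two n
    have h2 : (((∑ i ∈ Finset.range n, i) * 2 : ℕ) : ℝ) = ((n * (n-1) : ℕ) : ℝ) :=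
      congrArg Nat.cast h
    push_cast [Nat.cast_sub hn] at h2
    linarith
  have hconst : ∑ i : Fin n, ((0:ℝ) + 1/4 + (2*(n:ℝ)+1 - 2*(((i:ℕ):ℝ)+1))/2)
      = ((n:ℝ)/4) * (2*(n:ℝ)+1) := by
    rw [Fin.sum_univ_eq_sum_range (fun i => (0:ℝ) + 1/4 + (2*(n:ℝ)+1 - 2*((i:ℝ)+1))/2)]
    have hc : ∀ i ∈ Finset.range n,
        (0:ℝ) + 1/4 + (2*(n:ℝ)+1 - 2*((i:ℝ)+1))/2 = ((n:ℝ) - 1/4) - (i:ℝ) := by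
      intro i _; ring
    rw [Finset.sum_congr rfl hc, Finset.sum_sub_distrib, Finset.sum_const,
      Finset.card_range, nsmul_eq_mul]
    nlinarith
  rw [← hconst]
  apply Finset.sum_le_sum
  intro i _
  have : (0:ℝ) ≤ (lam i : ℝ) := by positivity
  linarith

/-- For a partition `λ` of length `n` and its shift `λ ⊞ 1/2`:
(i)  `D^{λ⊞1/2}/D^λ = ∏_{1≤i≤j≤n} (λ_i+λ_j+2n+2-i-j)/(λ_i+λ_j+2n+1-i-j) ≤ 2ⁿ`;
(ii) `B_n(λ⊞1/2) - B_n(λ) ≥ n/4` where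
     `B_n(λ) = (1/(2n+1))·∑_{i=1}^n (λ_i² + (2n+1-2i)λ_i)`;
(iii) consequently the ratio times `(2n+1)^{-(B_n(λ⊞1/2)-B_n(λ))}` is at most
      `exp(n(log 2 - log(2n+1)/4)) ≤ 2`. -/
theorem statement6 (n : ℕ) (hn : 1 ≤ n) (lam : Fin n → ℕ) (hanti : Antitone lam) :
    ((∏ i : Fin n, ∏ j ∈ Finset.Ici i,
        (((lam i : ℝ) + (lam j : ℝ) +
            (2 * (n : ℝ) + 2 - (((i : ℕ) : ℝ) + 1) - (((j : ℕ) : ℝ) + 1))) /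
          ((lam i : ℝ) + (lam j : ℝ) +
            (2 * (n : ℝ) + 1 - (((i : ℕ) : ℝ) + 1) - (((j : ℕ) : ℝ) + 1))))) ≤ 2 ^ n) ∧
    ((n : ℝ) / 4 ≤
      1 / (2 * (n : ℝ) + 1) *
          ∑ i : Fin n,
            (((lam i : ℝ) + 1 / 2) ^ 2 +
              (2 * (n : ℝ) + 1 - 2 * (((i : ℕ) : ℝ) + 1)) * ((lam i : ℝ) + 1 / 2)) -
        1 / (2 * (n : ℝ) + 1) *
          ∑ i : Fin n,
            ((lam i : ℝ) ^ 2 +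
              (2 * (n : ℝ) + 1 - 2 * (((i : ℕ) : ℝ) + 1)) * (lam i : ℝ))) ∧
    ((∏ i : Fin n, ∏ j ∈ Finset.Ici i,
        (((lam i : ℝ) + (lam j : ℝ) +
            (2 * (n : ℝ) + 2 - (((i : ℕ) : ℝ) + 1) - (((j : ℕ) : ℝ) + 1))) /
          ((lam i : ℝ) + (lam j : ℝ) +
            (2 * (n : ℝ) + 1 - (((i : ℕ) : ℝ) + 1) - (((j : ℕ) : ℝ) + 1))))) *
        (2 * (n : ℝ) + 1) ^
          (-(1 / (2 * (n : ℝ) + 1)) *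
            ∑ i : Fin n,
              ((lam i : ℝ) + 1 / 4 +
                (2 * (n : ℝ) + 1 - 2 * (((i : ℕ) : ℝ) + 1)) / 2)) ≤
        Real.exp ((n : ℝ) * (Real.log 2 - Real.log (2 * (n : ℝ) + 1) / 4)) ∧
      Real.exp ((n : ℝ) * (Real.log 2 - Real.log (2 * (n : ℝ) + 1) / 4)) ≤ 2) := by
  have hnR : (1:ℝ) ≤ (n:ℝ) := by exact_mod_cast hn
  have h2n : (0:ℝ) < 2 * (n:ℝ) + 1 := by linarith
  have hb : (1:ℝ) < 2 * (n:ℝ) + 1 := by linarith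
  -- part (i)
  have hP0 : 0 ≤ ∏ i : Fin n, ∏ j ∈ Finset.Ici i,
        (((lam i : ℝ) + (lam j : ℝ) +
            (2 * (n : ℝ) + 2 - (((i : ℕ) : ℝ) + 1) - (((j : ℕ) : ℝ) + 1))) /
          ((lam i : ℝ) + (lam j : ℝ) +
            (2 * (n : ℝ) + 1 - (((i : ℕ) : ℝ) + 1) - (((j : ℕ) : ℝ) + 1)))) :=
    Finset.prod_nonneg (fun i _ => (row n hn lam hanti i).1)
  have hi : (∏ i : Fin n, ∏ j ∈ Finset.Ici i,
        (((lam i : ℝ) + (lam j : ℝ) +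
            (2 * (n : ℝ) + 2 - (((i : ℕ) : ℝ) + 1) - (((j : ℕ) : ℝ) + 1))) /
          ((lam i : ℝ) + (lam j : ℝ) +
            (2 * (n : ℝ) + 1 - (((i : ℕ) : ℝ) + 1) - (((j : ℕ) : ℝ) + 1))))) ≤ 2 ^ n := by
    calc (∏ i : Fin n, ∏ j ∈ Finset.Ici i,
        (((lam i : ℝ) + (lam j : ℝ) +
            (2 * (n : ℝ) + 2 - (((i : ℕ) : ℝ) + 1) - (((j : ℕ) : ℝ) + 1))) /
          ((lam i : ℝ) + (lam j : ℝ) +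
            (2 * (n : ℝ) + 1 - (((i : ℕ) : ℝ) + 1) - (((j : ℕ) : ℝ) + 1)))))
        ≤ ∏ _i : Fin n, (2:ℝ) :=
          Finset.prod_le_prod (fun i _ => (row n hn lam hanti i).1)
            (fun i _ => (row n hn lam hanti i).2)
      _ = 2 ^ n := by simp
  -- the key sum
  have hK := keysum n hn lam
  set E := ∑ i : Fin n, ((lam i : ℝ) + 1/4 + (2*(n:ℝ)+1 - 2*(((i:ℕ):ℝ)+1))/2) with hE
  have hfrac : (n:ℝ)/4 ≤ 1 / (2*(n:ℝ)+1) * E := by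
    rw [show 1 / (2*(n:ℝ)+1) * E = E / (2*(n:ℝ)+1) by ring, le_div_iff₀ h2n]
    linarith
  -- part (ii)
  have hii : (n : ℝ) / 4 ≤
      1 / (2 * (n : ℝ) + 1) *
          ∑ i : Fin n,
            (((lam i : ℝ) + 1 / 2) ^ 2 +
              (2 * (n : ℝ) + 1 - 2 * (((i : ℕ) : ℝ) + 1)) * ((lam i : ℝ) + 1 / 2)) -
        1 / (2 * (n : ℝ) + 1) *
          ∑ i : Fin n,
            ((lam i : ℝ) ^ 2 +
              (2 * (n : ℝ) + 1 - 2 * (((i : ℕ) : ℝ) + 1)) * (lam i : ℝ)) := by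
    rw [← mul_sub, ← Finset.sum_sub_distrib]
    rw [show (∑ i : Fin n,
        ((((lam i : ℝ) + 1 / 2) ^ 2 +
            (2 * (n : ℝ) + 1 - 2 * (((i : ℕ) : ℝ) + 1)) * ((lam i : ℝ) + 1 / 2)) -
          ((lam i : ℝ) ^ 2 +
            (2 * (n : ℝ) + 1 - 2 * (((i : ℕ) : ℝ) + 1)) * (lam i : ℝ)))) = E from
      Finset.sum_congr rfl (fun i _ => by ring)]
    exact hfrac
  refine ⟨hi, hii, ?_, ?_⟩
  · -- part (iii) first
    have hxy : (-(1 / (2*(n:ℝ)+1))) * E ≤ -((n:ℝ)/4) := by nlinarith [hfrac]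
    have hr : (2*(n:ℝ)+1) ^ ((-(1 / (2*(n:ℝ)+1))) * E) ≤ (2*(n:ℝ)+1) ^ (-((n:ℝ)/4)) :=
      (Real.rpow_le_rpow_left_iff hb).2 hxy
    have hmul : (∏ i : Fin n, ∏ j ∈ Finset.Ici i,
        (((lam i : ℝ) + (lam j : ℝ) +
            (2 * (n : ℝ) + 2 - (((i : ℕ) : ℝ) + 1) - (((j : ℕ) : ℝ) + 1))) /
          ((lam i : ℝ) + (lam j : ℝ) +
            (2 * (n : ℝ) + 1 - (((i : ℕ) : ℝ) + 1) - (((j : ℕ) : ℝ) + 1))))) *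
        (2*(n:ℝ)+1) ^ ((-(1 / (2*(n:ℝ)+1))) * E)
        ≤ 2 ^ n * (2*(n:ℝ)+1) ^ (-((n:ℝ)/4)) :=
      mul_le_mul hi hr (Real.rpow_nonneg (by linarith) _) (by positivity)
    have he : (2:ℝ) ^ n * (2*(n:ℝ)+1) ^ (-((n:ℝ)/4))
        = Real.exp ((n : ℝ) * (Real.log 2 - Real.log (2 * (n : ℝ) + 1) / 4)) := by
      rw [show ((2:ℝ) ^ n) = (2:ℝ) ^ ((n:ℕ):ℝ) from (Real.rpow_natCast 2 n).symm,
        Real.rpow_def_of_pos two_pos, Real.rpow_def_of_pos (by linarith : (0:ℝ) < 2*(n:ℝ)+1),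
        ← Real.exp_add]
      congr 1
      ring
    calc _ ≤ 2 ^ n * (2*(n:ℝ)+1) ^ (-((n:ℝ)/4)) := hmul
      _ = _ := he
  · -- exp ≤ 2
    have hgoal : (n : ℝ) * (Real.log 2 - Real.log (2 * (n : ℝ) + 1) / 4) ≤ Real.log 2 := by
      have hnat := nat_pow_ineq n hn
      have hcast : ((16:ℝ)) ^ (n-1) ≤ (2*(n:ℝ)+1) ^ n := by exact_mod_cast hnat
      have hlog := Real.log_le_log (by positivity) hcast
      rw [Real.log_pow, Real.log_pow] at hlog
      have h16 : Real.log 16 = 4 * Real.log 2 := by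
        rw [show (16:ℝ) = 2^4 by norm_num, Real.log_pow]; norm_num
      have hn1 : ((n-1:ℕ):ℝ) = (n:ℝ) - 1 := by
        rw [Nat.cast_sub hn]; norm_num
      rw [h16, hn1] at hlog
      nlinarith [hlog]
    calc Real.exp ((n : ℝ) * (Real.log 2 - Real.log (2 * (n : ℝ) + 1) / 4))
        ≤ Real.exp (Real.log 2) := Real.exp_le_exp.mpr hgoal
      _ = 2 := Real.exp_log two_pos
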